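/- Let B be a Prüfer domain with fraction field L, i.e., an integral domain such that for every prime ideal q of B the localization B_q, viewed as a subring of L, is a valuation ring of L. Then the map p ↦ B_p is a bijection from the set of prime ideals of B onto the set of valuation subrings of L that contain B; the zero ideal corresponds to the trivial valuation subring L itself, and the inverse map sends a valuation subring R ⊇ B to m_R ∩ B, where m_R is the maximal ideal of R. -/

import Mathlib

/-- `x ∈ L` belongs to the localization `B_p` of `B` at the prime `p`, viewed
inside the fraction field `L`: `x = a/b` with `b ∉ p`. -/
def MemLocalizationAt (B L : Type*) [CommRing B] [Field L] [Algebra B L]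
    (p : Ideal B) (x : L) : Prop :=
  ∃ a b : B, b ∉ p ∧ x * algebraMap B L b = algebraMap B L a

set_option linter.unusedSectionVars false in
/-- Recover the prime from its localization. -/
lemma prufer_mem_prime_iff (B L : Type*) [CommRing B] [IsDomain B] [Field L] [Algebra B L]
    [IsFractionRing B L] (p : Ideal B) (b : B) :
    b ∈ p ↔ (b = 0 ∨ ¬ MemLocalizationAt B L p (algebraMap B L b)⁻¹) := by
  have hinj := IsFractionRing.injective B L
  constructor
  · intro hb
    by_cases hb0 : b = 0
    · exact Or.inl hb0
    refine Or.inr ?_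
    rintro ⟨a, c, hc, h⟩
    have hfb : algebraMap B L b ≠ 0 := fun h0 => hb0 (hinj (by simpa using h0))
    have : algebraMap B L c = algebraMap B L (a * b) := by
      have := congrArg (· * algebraMap B L b) h
      simp only [map_mul] at *
      field_simp at this ⊢
      linear_combination this
    exact hc (by rw [hinj this]; exact p.mul_mem_left a hb)
  · rintro (rfl | h)
    · exact p.zero_mem
    by_contra hb
    have hb0 : b ≠ 0 := fun h0 => hb (h0 ▸ p.zero_mem)
    have hfb : algebraMap B L b ≠ 0 := fun h0 => hb0 (hinj (by simpa using h0))
    exact h ⟨1, b, hb, by rw [inv_mul_cancel₀ hfb, map_one]⟩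

theorem primes_biject_valuationSubrings_of_prufer
    (B L : Type*) [CommRing B] [IsDomain B] [Field L] [Algebra B L]
    [IsFractionRing B L]
    (hPrufer : ∀ q : Ideal B, q.IsPrime → ∀ x : L, x ≠ 0 →
      (MemLocalizationAt B L q x ∨ MemLocalizationAt B L q x⁻¹)) :
    (∀ p : Ideal B, p.IsPrime → ∃ R : ValuationSubring L,
        (∀ b : B, algebraMap B L b ∈ R) ∧
        (∀ x : L, x ∈ R ↔ MemLocalizationAt B L p x)) ∧
    (∀ p q : Ideal B, p.IsPrime → q.IsPrime →
        (∀ x : L, MemLocalizationAt B L p x ↔ MemLocalizationAt B L q x) → p = q) ∧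
    (∀ R : ValuationSubring L, (hBR : ∀ b : B, algebraMap B L b ∈ R) →
        ∃ p : Ideal B, p.IsPrime ∧
          p = (IsLocalRing.maximalIdeal R).comap
              ((algebraMap B L).codRestrict R.toSubring hBR) ∧
          ∀ x : L, x ∈ R ↔ MemLocalizationAt B L p x) ∧
    (∀ x : L, MemLocalizationAt B L (⊥ : Ideal B) x) := by
  have hinj := IsFractionRing.injective B L
  have f := algebraMap B L
  refine ⟨?_, ?_, ?_, ?_⟩
  · -- part 1 : each localization is a valuation subring
    intro p hp
    have h1 : (1 : B) ∉ p := fun h => hp.ne_top (Ideal.eq_top_iff_one p |>.mpr h)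
    refine ⟨{ carrier := {x | MemLocalizationAt B L p x}
              one_mem' := ⟨1, 1, h1, by simp⟩
              zero_mem' := ⟨0, 1, h1, by simp⟩
              mul_mem' := ?_
              add_mem' := ?_
              neg_mem' := ?_
              mem_or_inv_mem' := ?_ }, ?_, ?_⟩
    · rintro x y ⟨a, b, hb, hx⟩ ⟨c, d, hd, hy⟩
      refine ⟨a * c, b * d, fun h => ((hp.mem_or_mem h).elim hb hd), ?_⟩
      rw [map_mul, map_mul]
      calc x * y * (algebraMap B L b * algebraMap B L d)
          = (x * algebraMap B L b) * (y * algebraMap B L d) := by ring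
        _ = _ := by rw [hx, hy]
    · rintro x y ⟨a, b, hb, hx⟩ ⟨c, d, hd, hy⟩
      refine ⟨a * d + c * b, b * d, fun h => ((hp.mem_or_mem h).elim hb hd), ?_⟩
      rw [map_mul, map_add, map_mul, map_mul]
      calc (x + y) * (algebraMap B L b * algebraMap B L d)
          = (x * algebraMap B L b) * algebraMap B L d
            + (y * algebraMap B L d) * algebraMap B L b := by ring
        _ = _ := by rw [hx, hy]
    · rintro x ⟨a, b, hb, hx⟩
      exact ⟨-a, b, hb, by rw [map_neg, neg_mul, hx]⟩
    · intro x
      by_cases hx : x = 0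
      · exact Or.inl ⟨0, 1, h1, by simp [hx]⟩
      · exact hPrufer p hp x hx
    · intro b; exact ⟨b, 1, h1, by simp⟩
    · intro x; exact Iff.rfl
  · -- part 2 : injectivity
    intro p q hp hq H
    ext b
    rw [prufer_mem_prime_iff B L p b, prufer_mem_prime_iff B L q b, H]
  · -- part 3 : surjectivity
    intro R hBR
    set g := (algebraMap B L).codRestrict R.toSubring hBR with hg
    set p := (IsLocalRing.maximalIdeal R).comap g with hpdef
    have hmem : ∀ b : B, b ∈ p ↔ ¬ IsUnit (g b) := fun b => by
      rw [hpdef, Ideal.mem_comap, IsLocalRing.mem_maximalIdeal, mem_nonunits_iff]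
    have hp : p.IsPrime := Ideal.IsPrime.comap g
    have key : ∀ x : L, x ∈ R ↔ MemLocalizationAt B L p x := by
      intro x
      constructor
      · intro hxR
        by_cases hx0 : x = 0
        · refine ⟨0, 1, ?_, by simp [hx0]⟩
          rw [hmem]; simp [isUnit_one, map_one]
        rcases hPrufer p hp x hx0 with h | ⟨a, b, hb, h⟩
        · exact h
        · -- x⁻¹ * f b = f a, so f b = x * f a
          have hfb : x * algebraMap B L a = algebraMap B L b := by
            have := congrArg (x * ·) h
            simpa [← mul_assoc, mul_inv_cancel₀ hx0] using this.symm
          refine ⟨b, a, ?_, hfb⟩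
          intro ha
          apply hb
          rw [hmem] at ha ⊢
          intro hub
          apply ha
          -- g b = ⟨x, hxR⟩ * g a in R
          have hgb : g b = ⟨x, hxR⟩ * g a := by
            apply Subtype.ext
            exact hfb.symm
          rcases hub.exists_right_inv with ⟨s, hs⟩
          refine IsUnit.of_mul_eq_one (⟨x, hxR⟩ * s) ?_
          calc g a * (⟨x, hxR⟩ * s) = (⟨x, hxR⟩ * g a) * s := by ring
            _ = g b * s := by rw [hgb]
            _ = 1 := hs
      · rintro ⟨a, b, hb, hx⟩
        rw [hmem, not_not] at hb
        rcases hb.exists_right_inv with ⟨s, hs⟩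
        have hs' : (algebraMap B L b) * (s : L) = 1 := by
          have := congrArg (Subtype.val : R → L) hs
          exact this
        have : x = algebraMap B L a * (s : L) := by
          calc x = x * ((algebraMap B L b) * (s : L)) := by rw [hs', mul_one]
            _ = (x * algebraMap B L b) * (s : L) := by ring
            _ = _ := by rw [hx]
        rw [this]
        exact mul_mem (hBR a) s.2
    exact ⟨p, hp, rfl, key⟩
  · -- part 4 : the zero ideal gives all of L
    intro x
    obtain ⟨⟨a, b⟩, h⟩ := IsLocalization.surj (nonZeroDivisors B) x
    exact ⟨a, b, by simp [Ideal.mem_bot, nonZeroDivisors.coe_ne_zero b], h⟩
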